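/- Let τ : M₃ × ℝ³ → ℝ be twice continuously differentiable and define v(F,p) as the partial gradient of τ with respect to p. Assume: (G) there exists c : ℝ³ → ℝ³ with v(F, p + d) − v(F, p) = c(d) for all F, p, d; (P) τ(F, p) = τ(F, −p) for all (F, p); and (N) for each (F, p), the partial derivative of v with respect to p at (F,p) is an invertible linear map of ℝ³. Then there exists a linear map V : ℝ³ → ℝ³, independent of F and p, which is symmetric and invertible, such that v(F, p) = V p for all (F, p). -/

import Mathlib

open scoped RealInnerProductSpace

noncomputable section

abbrev M3 : Type := EuclideanSpace ℝ (Fin 3 × Fin 3)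
abbrev R3 : Type := EuclideanSpace ℝ (Fin 3)

/-- Proposition 3 (constitutive representation of velocity): under Galilean variance (G),
parity (P), and normality (N), the velocity mapping `v = ∂ₚτ` has the representation
`v(F,p) = V p` with `V` a symmetric, invertible tensor independent of `F` and `p`. -/
theorem stmt5 (τ : M3 × R3 → ℝ) (hτ : ContDiff ℝ 2 τ)
    (v : M3 → R3 → R3)
    (hv : ∀ (F : M3) (p : R3), v F p = gradient (fun q => τ (F, q)) p)
    (c : R3 → R3)
    (hG : ∀ (F : M3) (p d : R3), v F (p + d) - v F p = c d)
    (hP : ∀ (F : M3) (p : R3), τ (F, p) = τ (F, -p))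
    (hN : ∀ (F : M3) (p : R3), Function.Bijective (fderiv ℝ (v F) p)) :
    ∃ V : R3 →L[ℝ] R3,
      (∀ x y : R3, ⟪V x, y⟫ = ⟪x, V y⟫) ∧
      Function.Bijective V ∧
      (∀ (F : M3) (p : R3), v F p = V p) := by
  classical
  have hg : ∀ F : M3, ContDiff ℝ 2 (fun q : R3 => τ (F, q)) := fun F =>
    hτ.comp (contDiff_const.prodMk contDiff_id)
  have hd : ∀ (F : M3) (p : R3), DifferentiableAt ℝ (fun q : R3 => τ (F, q)) p := fun F p =>
    ((hg F).differentiable (by norm_num)).differentiableAt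
  -- parity implies v F 0 = 0
  have hv0 : ∀ F : M3, v F 0 = 0 := by
    intro F
    set g := fun q : R3 => τ (F, q) with hgdef
    have h1 : HasFDerivAt g (fderiv ℝ g 0) 0 := (hd F 0).hasFDerivAt
    have hnegid : HasFDerivAt (fun q : R3 => -q)
        (-(ContinuousLinearMap.id ℝ R3)) (0 : R3) := (hasFDerivAt_id (0 : R3)).neg
    have hneg : HasFDerivAt (fun q : R3 => g (-q))
        ((fderiv ℝ g 0).comp (-(ContinuousLinearMap.id ℝ R3))) 0 := by
      have h1' : HasFDerivAt g (fderiv ℝ g 0) (-(0 : R3)) := by simpa using h1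
      exact h1'.comp (0 : R3) hnegid
    have heq : (fun q : R3 => g (-q)) = g := by
      funext q; exact (hP F q).symm
    rw [heq] at hneg
    have h2 : fderiv ℝ g 0 = (fderiv ℝ g 0).comp (-(ContinuousLinearMap.id ℝ R3)) :=
      h1.unique hneg
    have hf0 : fderiv ℝ g 0 = 0 := by
      ext y
      have := congrFun (congrArg (fun L : R3 →L[ℝ] ℝ => (L : R3 → ℝ)) h2) y
      simp only [ContinuousLinearMap.comp_apply, ContinuousLinearMap.neg_apply,
        ContinuousLinearMap.id_apply, map_neg] at this
      have h3 : fderiv ℝ g 0 y = -(fderiv ℝ g 0 y) := this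
      have : fderiv ℝ g 0 y = 0 := by linarith
      simpa using this
    rw [hv F 0]
    show (InnerProductSpace.toDual ℝ R3).symm (fderiv ℝ g 0) = 0
    simp [hf0]
  -- hence v F p = c p for all F, p
  have hvc : ∀ (F : M3) (p : R3), v F p = c p := by
    intro F p
    have := hG F 0 p
    simpa [hv0 F] using this
  -- c is additive
  have hadd : ∀ d e : R3, c (d + e) = c d + c e := by
    intro d e
    have h := hG 0 d e
    rw [hvc 0 (d + e), hvc 0 d] at h
    linear_combination (norm := abel) h
  -- c is continuous
  have hcont : Continuous c := by
    have : Continuous fun p : R3 => v 0 p := by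
      have hfc : Continuous (fderiv ℝ (fun q : R3 => τ ((0 : M3), q))) :=
        (hg 0).continuous_fderiv (by norm_num)
      have : Continuous fun p : R3 =>
          (InnerProductSpace.toDual ℝ R3).symm (fderiv ℝ (fun q : R3 => τ ((0 : M3), q)) p) :=
        (InnerProductSpace.toDual ℝ R3).symm.continuous.comp hfc
      simpa [hv, gradient] using this
    have hve : (fun p : R3 => v 0 p) = c := funext fun p => hvc 0 p
    rwa [hve] at this
  -- the linear map
  set V : R3 →L[ℝ] R3 := (AddMonoidHom.mk' c hadd).toRealLinearMap hcont with hVdef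
  have hVc : ∀ p : R3, V p = c p := fun p =>
    congrFun (AddMonoidHom.coe_toRealLinearMap (AddMonoidHom.mk' c hadd) hcont) p
  have hvV : ∀ (F : M3) (p : R3), v F p = V p := fun F p => by rw [hvc F p, hVc p]
  refine ⟨V, ?_, ?_, hvV⟩
  · -- symmetry via symmetry of second derivative
    intro x y
    set g := fun q : R3 => τ ((0 : M3), q) with hgdef
    have hfd : ∀ p : R3, fderiv ℝ g p = InnerProductSpace.toDual ℝ R3 (V p) := by
      intro p
      have : gradient g p = V p := by rw [← hv 0 p, hvV 0 p]
      have := congrArg (InnerProductSpace.toDual ℝ R3) this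
      simpa [gradient] using this
    set T : R3 →L[ℝ] (R3 →L[ℝ] ℝ) :=
      ((InnerProductSpace.toDual ℝ R3).toContinuousLinearEquiv :
        R3 ≃L[ℝ] (StrongDual ℝ R3)).toContinuousLinearMap.comp V with hTdef
    have hf' : ∀ p : R3, HasFDerivAt g (T p) p := by
      intro p
      have := (hd 0 p).hasFDerivAt
      have hTp : T p = fderiv ℝ g p := by
        rw [hfd p]; rfl
      rwa [← hTp] at this
    have hf'' : HasFDerivAt (fun p => T p) T 0 := T.hasFDerivAt
    have hsymm := second_derivative_symmetric hf' hf'' x y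
    have hx : T x y = ⟪V x, y⟫ := by
      simp [hTdef, InnerProductSpace.toDual_apply_apply]
    have hy : T y x = ⟪V y, x⟫ := by
      simp [hTdef, InnerProductSpace.toDual_apply_apply]
    rw [hx, hy] at hsymm
    rw [hsymm, real_inner_comm]
  · -- bijectivity from normality
    have h := hN 0 0
    have hfun : v 0 = ⇑V := funext fun p => hvV 0 p
    rw [hfun, V.fderiv] at h
    exact h
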